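/- For the full singularly perturbed system ξ' = (P_d − Σᵢ αᵢ zᵢ)/ᾱ, ε z₁' = ξ − z₁, ε zᵢ' = z_{i-1} − zᵢ (i = 2,…,n), with all αᵢ > 0, the linearization matrix at the equilibrium is Hurwitz for all sufficiently small ε > 0; consequently the equilibrium (ξ₀, ξ₀·1) with ξ₀ = P_d/Σᵢαᵢ is locally asymptotically stable for all sufficiently small ε > 0. -/

import Mathlib

open Filter Matrix Finset


set_option maxHeartbeats 2000000 in
private lemma core_ineq (n : ℕ) (b e : ℕ → ℝ) (he0 : e 0 = 0)
    (hb : ∀ k, 0 ≤ b k) (hb1 : ∀ k, b k ≤ 1) (u ε : ℝ) (hε : 0 < ε)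
    (hεs : ε * (2 ^ n * 12 * (1 + ∑ k ∈ range (n+1), b k)) ≤ 1) :
    u * (-((∑ k ∈ range (n+1), b k) * u) - ∑ k ∈ range (n+1), b k * e k)
      + ∑ k ∈ range (n+1), (2:ℝ)⁻¹ ^ k * e k *
          ((e (k-1) - e k)/ε + ((∑ k ∈ range (n+1), b k) * u + ∑ k ∈ range (n+1), b k * e k))
    ≤ -((∑ k ∈ range (n+1), b k)/2) * (u^2 + ∑ k ∈ range (n+1), (2:ℝ)⁻¹ ^ k * e k ^ 2) := by
  have hw0 : ∀ k, (0:ℝ) ≤ (2:ℝ)⁻¹ ^ k := fun k => by positivity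
  have hw1 : ∀ k, ((2:ℝ)⁻¹ : ℝ) ^ k ≤ 1 := fun k => pow_le_one₀ (by norm_num) (by norm_num)
  have hsplit : ∀ c : ℝ, ∑ k ∈ range (n+1), (2:ℝ)⁻¹ ^ k * e k * ((e (k-1) - e k)/ε + c)
      = (∑ k ∈ range (n+1), (2:ℝ)⁻¹ ^ k * e k * (e (k-1) - e k))/ε
        + (∑ k ∈ range (n+1), (2:ℝ)⁻¹ ^ k * e k) * c := by
    intro c
    rw [Finset.sum_div, Finset.sum_mul, ← Finset.sum_add_distrib]
    exact Finset.sum_congr rfl fun k _ => by ring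
  obtain ⟨A, hA⟩ : ∃ A, (∑ k ∈ range (n+1), b k) = A := ⟨_, rfl⟩
  obtain ⟨S, hS⟩ : ∃ S, (∑ k ∈ range (n+1), b k * e k) = S := ⟨_, rfl⟩
  obtain ⟨T, hT⟩ : ∃ T, (∑ k ∈ range (n+1), (2:ℝ)⁻¹ ^ k * e k) = T := ⟨_, rfl⟩
  obtain ⟨F, hF⟩ : ∃ F, (∑ k ∈ range (n+1), (2:ℝ)⁻¹ ^ k * e k * (e (k-1) - e k)) = F := ⟨_, rfl⟩
  obtain ⟨Q, hQ⟩ : ∃ Q, (∑ k ∈ range (n+1), e k ^ 2) = Q := ⟨_, rfl⟩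
  obtain ⟨G, hG⟩ : ∃ G, (∑ k ∈ range (n+1), (2:ℝ)⁻¹ ^ k * e k ^ 2) = G := ⟨_, rfl⟩
  rw [hsplit, hA, hS, hT, hF, hG]
  rw [hA] at hεs
  have hA0 : 0 ≤ A := by rw [← hA]; exact Finset.sum_nonneg fun k _ => hb k
  have hQ0 : 0 ≤ Q := by rw [← hQ]; exact Finset.sum_nonneg fun k _ => sq_nonneg _
  have hG0 : 0 ≤ G := by rw [← hG]; exact Finset.sum_nonneg fun k _ => mul_nonneg (hw0 k) (sq_nonneg _)
  have hGQ : G ≤ Q := by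
    rw [← hG, ← hQ]
    exact Finset.sum_le_sum fun k _ => mul_le_of_le_one_left (sq_nonneg (e k)) (hw1 k)
  have hwsum : ∑ k ∈ range (n+1), (2:ℝ)⁻¹ ^ k ≤ 2 := by
    have h := sum_geometric_two_le (n+1)
    simp only [one_div] at h
    exact h
  have hwsum0 : 0 ≤ ∑ k ∈ range (n+1), (2:ℝ)⁻¹ ^ k := Finset.sum_nonneg fun k _ => hw0 k
  -- bound 1 : -(u*S) ≤ (A/8)*u^2 + 2*Q
  have h1 : -(u*S) ≤ A/8 * u^2 + 2*Q := by
    have e0 : -(u*S) = ∑ k ∈ range (n+1), -(b k * e k * u) := by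
      rw [← hS, Finset.mul_sum, ← Finset.sum_neg_distrib]
      exact Finset.sum_congr rfl fun k _ => by ring
    rw [e0]
    have step : ∑ k ∈ range (n+1), -(b k * e k * u)
        ≤ ∑ k ∈ range (n+1), (b k * (u^2/8) + 2 * e k ^2) := by
      refine Finset.sum_le_sum fun k _ => ?_
      nlinarith [mul_nonneg (hb k) (sq_nonneg (u + 4 * e k)),
        mul_nonneg (sub_nonneg.2 (hb1 k)) (sq_nonneg (e k))]
    refine step.trans ?_
    rw [Finset.sum_add_distrib, ← Finset.sum_mul, ← Finset.mul_sum, hA, hQ]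
    nlinarith [hA0, hQ0, sq_nonneg u]
  -- bound 2 : A*u*T ≤ (A/4)*u^2 + 2*A*Q
  have h2 : A*u*T ≤ A/4 * u^2 + 2*A*Q := by
    have e0 : A*u*T = ∑ k ∈ range (n+1), A * ((2:ℝ)⁻¹ ^ k * e k * u) := by
      rw [← hT, Finset.mul_sum]
      exact Finset.sum_congr rfl fun k _ => by ring
    rw [e0]
    have step : ∑ k ∈ range (n+1), A * ((2:ℝ)⁻¹ ^ k * e k * u)
        ≤ ∑ k ∈ range (n+1), A * ((2:ℝ)⁻¹ ^ k * (u^2/8) + 2 * ((2:ℝ)⁻¹ ^ k * e k ^2)) := by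
      refine Finset.sum_le_sum fun k _ => ?_
      have key : (2:ℝ)⁻¹ ^ k * e k * u
          ≤ (2:ℝ)⁻¹ ^ k * (u^2/8) + 2*((2:ℝ)⁻¹ ^ k * e k^2) := by
        nlinarith [mul_nonneg (hw0 k) (sq_nonneg (u - 4 * e k))]
      exact mul_le_mul_of_nonneg_left key hA0
    refine step.trans ?_
    have e1 : ∑ k ∈ range (n+1), A * ((2:ℝ)⁻¹ ^ k * (u^2/8) + 2 * ((2:ℝ)⁻¹ ^ k * e k ^2))
        = A * ((∑ k ∈ range (n+1), (2:ℝ)⁻¹ ^ k) * (u^2/8)) + 2*A*G := by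
      rw [← hG]
      calc ∑ k ∈ range (n+1), A * ((2:ℝ)⁻¹ ^ k * (u^2/8) + 2 * ((2:ℝ)⁻¹ ^ k * e k ^2))
          = ∑ k ∈ range (n+1), ((A * (u^2/8)) * (2:ℝ)⁻¹ ^ k
              + (2*A) * ((2:ℝ)⁻¹ ^ k * e k ^2)) :=
            Finset.sum_congr rfl fun k _ => by ring
        _ = (A * (u^2/8)) * (∑ k ∈ range (n+1), (2:ℝ)⁻¹ ^ k)
              + (2*A) * (∑ k ∈ range (n+1), (2:ℝ)⁻¹ ^ k * e k ^2) := by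
            rw [Finset.sum_add_distrib, ← Finset.mul_sum, ← Finset.mul_sum]
        _ = A * ((∑ k ∈ range (n+1), (2:ℝ)⁻¹ ^ k) * (u^2/8))
              + 2*A*(∑ k ∈ range (n+1), (2:ℝ)⁻¹ ^ k * e k ^2) := by ring
    rw [e1]
    nlinarith [mul_nonneg (mul_nonneg hA0 (sub_nonneg.2 hwsum)) (sq_nonneg u),
      mul_nonneg hA0 (sub_nonneg.2 hGQ), hwsum0]
  -- Cauchy-Schwarz bounds
  have hS2 : S^2 ≤ A * Q := by
    have cs := Finset.sum_mul_sq_le_sq_mul_sq (range (n+1))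
      (fun k => Real.sqrt (b k)) (fun k => Real.sqrt (b k) * e k)
    have e1 : ∑ k ∈ range (n+1), Real.sqrt (b k) * (Real.sqrt (b k) * e k) = S := by
      rw [← hS]
      exact Finset.sum_congr rfl fun k _ => by
        rw [← mul_assoc, Real.mul_self_sqrt (hb k)]
    have e2 : ∑ k ∈ range (n+1), Real.sqrt (b k) ^ 2 = A := by
      rw [← hA]; exact Finset.sum_congr rfl fun k _ => Real.sq_sqrt (hb k)
    have e3 : ∑ k ∈ range (n+1), (Real.sqrt (b k) * e k) ^ 2 ≤ Q := by
      rw [← hQ]; refine Finset.sum_le_sum fun k _ => ?_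
      rw [mul_pow, Real.sq_sqrt (hb k)]
      exact mul_le_of_le_one_left (sq_nonneg (e k)) (hb1 k)
    calc S^2 = (∑ k ∈ range (n+1), Real.sqrt (b k) * (Real.sqrt (b k) * e k))^2 := by rw [e1]
      _ ≤ (∑ k ∈ range (n+1), Real.sqrt (b k) ^ 2) *
            (∑ k ∈ range (n+1), (Real.sqrt (b k) * e k) ^ 2) := cs
      _ ≤ A * Q := by rw [e2]; exact mul_le_mul_of_nonneg_left e3 hA0
  have hT2 : T^2 ≤ 2 * Q := by
    have cs := Finset.sum_mul_sq_le_sq_mul_sq (range (n+1))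
      (fun k => Real.sqrt ((2:ℝ)⁻¹ ^ k)) (fun k => Real.sqrt ((2:ℝ)⁻¹ ^ k) * e k)
    have e1 : ∑ k ∈ range (n+1), Real.sqrt ((2:ℝ)⁻¹ ^ k) * (Real.sqrt ((2:ℝ)⁻¹ ^ k) * e k) = T := by
      rw [← hT]
      exact Finset.sum_congr rfl fun k _ => by
        rw [← mul_assoc, Real.mul_self_sqrt (hw0 k)]
    have e2 : ∑ k ∈ range (n+1), Real.sqrt ((2:ℝ)⁻¹ ^ k) ^ 2 = ∑ k ∈ range (n+1), (2:ℝ)⁻¹ ^ k :=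
      Finset.sum_congr rfl fun k _ => Real.sq_sqrt (hw0 k)
    have e3 : ∑ k ∈ range (n+1), (Real.sqrt ((2:ℝ)⁻¹ ^ k) * e k) ^ 2 ≤ Q := by
      rw [← hQ]; refine Finset.sum_le_sum fun k _ => ?_
      rw [mul_pow, Real.sq_sqrt (hw0 k)]
      exact mul_le_of_le_one_left (sq_nonneg (e k)) (hw1 k)
    have e30 : 0 ≤ ∑ k ∈ range (n+1), (Real.sqrt ((2:ℝ)⁻¹ ^ k) * e k) ^ 2 :=
      Finset.sum_nonneg fun k _ => sq_nonneg _
    calc T^2 = (∑ k ∈ range (n+1), Real.sqrt ((2:ℝ)⁻¹ ^ k) * (Real.sqrt ((2:ℝ)⁻¹ ^ k) * e k))^2 := by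
          rw [e1]
      _ ≤ (∑ k ∈ range (n+1), Real.sqrt ((2:ℝ)⁻¹ ^ k) ^ 2) *
            (∑ k ∈ range (n+1), (Real.sqrt ((2:ℝ)⁻¹ ^ k) * e k) ^ 2) := cs
      _ ≤ 2 * Q := by
          rw [e2]
          have h7 := mul_le_mul_of_nonneg_right hwsum e30
          linarith [e3]
  have h3 : S * T ≤ A/2 * Q + Q := by nlinarith [hS2, hT2, sq_nonneg (S - T)]
  -- bound 4 : F ≤ -(2⁻¹^n / 4) * Q
  have h4 : F ≤ -((2:ℝ)⁻¹ ^ n / 4) * Q := by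
    have step : F ≤ ∑ k ∈ range (n+1), (2:ℝ)⁻¹ ^ k * (e (k-1)^2 - e k^2) / 2 := by
      rw [← hF]
      refine Finset.sum_le_sum fun k _ => ?_
      nlinarith [mul_nonneg (hw0 k) (sq_nonneg (e k - e (k-1)))]
    have shift : ∑ k ∈ range (n+1), (2:ℝ)⁻¹ ^ k * e (k-1)^2
        = ∑ k ∈ range n, (2:ℝ)⁻¹ ^ (k+1) * e k ^2 := by
      rw [Finset.sum_range_succ']
      simp [he0]
    have half : ∑ k ∈ range n, (2:ℝ)⁻¹ ^ (k+1) * e k ^ 2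
        = (1/2) * ∑ k ∈ range n, (2:ℝ)⁻¹ ^ k * e k ^2 := by
      rw [Finset.mul_sum]
      refine Finset.sum_congr rfl fun k _ => ?_
      rw [pow_succ]; ring
    have lastt : ∑ k ∈ range n, (2:ℝ)⁻¹ ^ k * e k ^ 2 = G - (2:ℝ)⁻¹ ^ n * e n ^2 := by
      rw [← hG, Finset.sum_range_succ]; ring
    have hGwQ : (2:ℝ)⁻¹ ^ n * Q ≤ G := by
      rw [← hG, ← hQ, Finset.mul_sum]
      refine Finset.sum_le_sum fun k hk => ?_
      have hk' : k ≤ n := by have := Finset.mem_range.mp hk; omega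
      have hwk : (2:ℝ)⁻¹ ^ n ≤ (2:ℝ)⁻¹ ^ k :=
        pow_le_pow_of_le_one (by norm_num) (by norm_num) hk'
      exact mul_le_mul_of_nonneg_right hwk (sq_nonneg (e k))
    have expand : ∑ k ∈ range (n+1), (2:ℝ)⁻¹ ^ k * (e (k-1)^2 - e k^2) / 2
        = (∑ k ∈ range (n+1), (2:ℝ)⁻¹ ^ k * e (k-1)^2) / 2 - G/2 := by
      rw [← hG, Finset.sum_div, Finset.sum_div, ← Finset.sum_sub_distrib]
      exact Finset.sum_congr rfl fun k _ => by ring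
    have hen : 0 ≤ (2:ℝ)⁻¹ ^ n * e n ^2 := mul_nonneg (hw0 n) (sq_nonneg _)
    calc F ≤ ∑ k ∈ range (n+1), (2:ℝ)⁻¹ ^ k * (e (k-1)^2 - e k^2) / 2 := step
      _ = (∑ k ∈ range (n+1), (2:ℝ)⁻¹ ^ k * e (k-1)^2) / 2 - G/2 := expand
      _ = ((1/2) * (G - (2:ℝ)⁻¹ ^ n * e n ^2))/2 - G/2 := by rw [shift, half, lastt]
      _ = -(G/4) - ((2:ℝ)⁻¹ ^ n * e n^2)/4 := by ring
      _ ≤ -((2:ℝ)⁻¹ ^ n / 4) * Q := by linarith [hGwQ, hen]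
  -- epsilon consequence
  have hwn : ((2:ℝ)⁻¹) ^ n = ((2:ℝ)^n)⁻¹ := by rw [inv_pow]
  have h6 : (3+3*A)*ε ≤ (2:ℝ)⁻¹ ^ n / 4 := by
    rw [hwn, show ((2:ℝ)^n)⁻¹/4 = 1/(2^n*4) by field_simp, le_div_iff₀ (by positivity)]
    calc (3+3*A)*ε*(2^n*4) = ε * (2^n * 12 * (1+A)) := by ring
      _ ≤ 1 := hεs
  have h5 : F / ε ≤ -(3 + 3*A) * Q := by
    have hF2 : F ≤ -((3+3*A)*ε) * Q := by
      refine h4.trans ?_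
      have h7 := mul_le_mul_of_nonneg_right h6 hQ0
      linarith [h7]
    have hd : F / ε ≤ (-((3+3*A)*ε) * Q) / ε := div_le_div_of_nonneg_right hF2 hε.le
    refine hd.trans (le_of_eq ?_)
    rw [div_eq_iff hε.ne']
    ring
  -- assemble
  linarith [h1, h2, h3, h5, mul_nonneg hA0 (sq_nonneg u),
    mul_nonneg hA0 (sub_nonneg.2 hGQ)]



noncomputable def Wf (n : ℕ) (y z : Fin (n+1) → ℝ) : ℝ :=
  y 0 * z 0 + ∑ j : Fin (n+1), (2:ℝ)⁻¹ ^ (j : ℕ) * ((y j - y 0) * (z j - z 0))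

lemma Wf_symm (n : ℕ) (y z : Fin (n+1) → ℝ) : Wf n y z = Wf n z y := by
  unfold Wf
  rw [mul_comm (y 0)]
  congr 1
  exact Finset.sum_congr rfl fun j _ => by ring

lemma Wf_comb (n : ℕ) (r s : ℝ) (y z₁ z₂ : Fin (n+1) → ℝ) :
    Wf n y (fun i => r * z₁ i + s * z₂ i) = r * Wf n y z₁ + s * Wf n y z₂ := by
  unfold Wf
  have hsum : ∑ j : Fin (n+1), (2:ℝ)⁻¹ ^ (j : ℕ) *
        ((y j - y 0) * ((r * z₁ j + s * z₂ j) - (r * z₁ 0 + s * z₂ 0)))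
      = r * ∑ j : Fin (n+1), (2:ℝ)⁻¹ ^ (j : ℕ) * ((y j - y 0) * (z₁ j - z₁ 0))
        + s * ∑ j : Fin (n+1), (2:ℝ)⁻¹ ^ (j : ℕ) * ((y j - y 0) * (z₂ j - z₂ 0)) := by
    rw [Finset.mul_sum, Finset.mul_sum, ← Finset.sum_add_distrib]
    exact Finset.sum_congr rfl fun j _ => by ring
  simp only []
  rw [hsum]
  ring

lemma Wf_nonneg (n : ℕ) (y : Fin (n+1) → ℝ) : 0 ≤ Wf n y y := by
  unfold Wf
  refine add_nonneg (mul_self_nonneg _) (Finset.sum_nonneg fun j _ => ?_)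
  exact mul_nonneg (by positivity) (mul_self_nonneg _)

lemma Wf_term_le (n : ℕ) (y : Fin (n+1) → ℝ) (i : Fin (n+1)) :
    (2:ℝ)⁻¹ ^ (i : ℕ) * ((y i - y 0) * (y i - y 0)) ≤ Wf n y y := by
  unfold Wf
  have h := Finset.single_le_sum
    (f := fun j : Fin (n+1) => (2:ℝ)⁻¹ ^ (j : ℕ) * ((y j - y 0) * (y j - y 0)))
    (fun j _ => mul_nonneg (by positivity) (mul_self_nonneg _)) (Finset.mem_univ i)
  nlinarith [mul_self_nonneg (y 0)]

lemma Wf_head_le (n : ℕ) (y : Fin (n+1) → ℝ) : y 0 * y 0 ≤ Wf n y y := by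
  unfold Wf
  have : 0 ≤ ∑ j : Fin (n+1), (2:ℝ)⁻¹ ^ (j : ℕ) * ((y j - y 0) * (y j - y 0)) :=
    Finset.sum_nonneg fun j _ => mul_nonneg (by positivity) (mul_self_nonneg _)
  linarith

lemma Wf_pos (n : ℕ) (y : Fin (n+1) → ℝ) (hy : y ≠ 0) : 0 < Wf n y y := by
  obtain ⟨i, hi⟩ : ∃ i, y i ≠ 0 := by
    by_contra h
    push_neg at h
    exact hy (funext fun i => h i)
  rcases eq_or_ne (y 0) 0 with h0 | h0
  · have hne : y i - y 0 ≠ 0 := by rw [h0, sub_zero]; exact hi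
    have hterm : 0 < (2:ℝ)⁻¹ ^ (i : ℕ) * ((y i - y 0) * (y i - y 0)) := by
      have h2 : 0 < (y i - y 0) * (y i - y 0) := mul_self_pos.mpr hne
      positivity
    exact lt_of_lt_of_le hterm (Wf_term_le n y i)
  · exact lt_of_lt_of_le (mul_self_pos.mpr h0) (Wf_head_le n y)


/-- For the full singularly perturbed system ξ' = (P_d − ∑ αᵢ zᵢ)/ᾱ, ε z₁' = ξ − z₁,
ε zᵢ' = z_{i-1} − zᵢ, the system matrix M(ε) is Hurwitz for all sufficiently small
ε > 0, and consequently the equilibrium (ξ₀, ξ₀·1) with ξ₀ = P_d/∑αᵢ is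
asymptotically stable for all sufficiently small ε > 0. -/
theorem stmt9 (n : ℕ) (hn : 1 ≤ n)
    (Pd : ℝ) (α : Fin n → ℝ) (hα : ∀ i, 0 < α i)
    (abar : ℝ) (habar : abar = Finset.univ.sup' (Finset.univ_nonempty_iff.mpr ⟨⟨0, hn⟩⟩) α)
    (M : ℝ → Matrix (Fin (n + 1)) (Fin (n + 1)) ℝ)
    (hM : ∀ ε : ℝ, ∀ i j : Fin (n + 1), M ε i j =
      if hi : (i : ℕ) = 0 then
        (if hj : (j : ℕ) = 0 then 0 else -(α ⟨(j : ℕ) - 1, by omega⟩) / abar)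
      else
        if (j : ℕ) = (i : ℕ) then -1 / ε
        else if (j : ℕ) + 1 = (i : ℕ) then 1 / ε else 0) :
    ∃ εstar : ℝ, 0 < εstar ∧ ∀ ε : ℝ, 0 < ε → ε < εstar →
      ((∀ lam : ℂ,
          (((M ε).map Complex.ofReal) - lam • (1 : Matrix (Fin (n + 1)) (Fin (n + 1)) ℂ)).det = 0
          → lam.re < 0) ∧
        (∀ x : ℝ → Fin (n + 1) → ℝ,
          (∀ t : ℝ, ∀ i : Fin (n + 1),
            HasDerivAt (fun s => x s i)
              (∑ j : Fin (n + 1), M ε i j * x t j +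
                (if (i : ℕ) = 0 then Pd / abar else 0)) t) →
          ∀ i : Fin (n + 1),
            Tendsto (fun t => x t i) atTop (nhds (Pd / ∑ i : Fin n, α i)))) := by
  classical
  have habar_pos : 0 < abar := by
    rw [habar]
    exact lt_of_lt_of_le (hα ⟨0, hn⟩) (Finset.le_sup' α (Finset.mem_univ _))
  have hαle : ∀ i, α i ≤ abar := fun i => by
    rw [habar]; exact Finset.le_sup' α (Finset.mem_univ i)
  have hAsum_pos : 0 < ∑ i : Fin n, α i :=
    Finset.sum_pos (fun i _ => hα i) ⟨⟨0, hn⟩, Finset.mem_univ _⟩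
  set ξ0 : ℝ := Pd / ∑ i : Fin n, α i with hξ0
  set b : Fin (n+1) → ℝ :=
    fun j => if h : (j:ℕ) = 0 then 0 else α ⟨(j:ℕ)-1, by have := j.2; omega⟩ / abar with hb_def
  have hb0 : b 0 = 0 := by simp [hb_def]
  have hbnn : ∀ j, 0 ≤ b j := by
    intro j
    by_cases h : (j:ℕ) = 0
    · simp only [hb_def, dif_pos h, le_refl]
    · simp only [hb_def, dif_neg h]
      exact div_nonneg (hα _).le habar_pos.le
  have hb1 : ∀ j, b j ≤ 1 := by
    intro j
    by_cases h : (j:ℕ) = 0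
    · simp only [hb_def, dif_pos h]; norm_num
    · simp only [hb_def, dif_neg h]
      rw [div_le_one habar_pos]
      exact hαle _
  set A : ℝ := (∑ i : Fin n, α i) / abar with hA_def
  have hA_pos : 0 < A := div_pos hAsum_pos habar_pos
  have hbsum : ∑ j : Fin (n+1), b j = A := by
    rw [Fin.sum_univ_succ, hb0, zero_add, hA_def, Finset.sum_div]
    refine Finset.sum_congr rfl fun i _ => ?_
    have hne : ((i.succ : Fin (n+1)) : ℕ) ≠ 0 := by simp [Fin.val_succ]
    simp only [hb_def, dif_neg hne]
    have hidx : (⟨((i.succ : Fin (n+1)) : ℕ) - 1,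
        by have := (i.succ : Fin (n+1)).2; omega⟩ : Fin n) = i := by
      ext; simp [Fin.val_succ]
    rw [hidx]
  refine ⟨1 / (2^n * 12 * (1 + A)), by positivity, ?_⟩
  intro ε hε0 hεlt
  have hεs : ε * (2^n * 12 * (1 + A)) ≤ 1 := by
    rw [lt_div_iff₀ (by positivity)] at hεlt
    exact hεlt.le
  -- mulVec formula
  have hMv : ∀ y : Fin (n+1) → ℝ, ∀ i : Fin (n+1), (M ε).mulVec y i =
      if h : (i:ℕ) = 0 then -∑ j : Fin (n+1), b j * y j
      else (y ⟨(i:ℕ)-1, by have := i.2; omega⟩ - y i)/ε := by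
    intro y i
    by_cases h : (i:ℕ) = 0
    · rw [dif_pos h]
      rw [show (M ε).mulVec y i = ∑ j, M ε i j * y j from by
        simp [Matrix.mulVec, dotProduct]]
      rw [← Finset.sum_neg_distrib]
      refine Finset.sum_congr rfl fun j _ => ?_
      rw [hM ε i j, dif_pos h]
      by_cases hj : (j:ℕ) = 0
      · have hbj : b j = 0 := by simp only [hb_def, dif_pos hj]
        rw [dif_pos hj, hbj]
        ring
      · have hbj : b j = α ⟨(j:ℕ)-1, by have := j.2; omega⟩ / abar := by
          simp only [hb_def, dif_neg hj]
        rw [dif_neg hj, hbj]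
        ring
    · rw [dif_neg h]
      rw [show (M ε).mulVec y i = ∑ j, M ε i j * y j from by
        simp [Matrix.mulVec, dotProduct]]
      have hlt : (i:ℕ) - 1 < n + 1 := by have := i.2; omega
      have hstep : ∀ j : Fin (n+1), M ε i j * y j =
          (if j = i then (-1/ε) * y j else 0)
            + (if j = (⟨(i:ℕ)-1, hlt⟩ : Fin (n+1)) then (1/ε) * y j else 0) := by
        intro j
        rw [hM ε i j, dif_neg h]
        rcases eq_or_ne j i with rfl | hji
        · rw [if_pos rfl, if_pos rfl, if_neg, add_zero]
          intro hcon
          have := congrArg Fin.val hcon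
          simp at this
          omega
        · have hvne : ¬ ((j:ℕ) = (i:ℕ)) := fun hc => hji (Fin.ext hc)
          rw [if_neg hvne, if_neg hji, zero_add]
          by_cases hj2 : (j:ℕ) + 1 = (i:ℕ)
          · have hjeq : j = (⟨(i:ℕ)-1, hlt⟩ : Fin (n+1)) :=
              Fin.ext (by show (j:ℕ) = (i:ℕ)-1; omega)
            rw [if_pos hj2, if_pos hjeq]
          · rw [if_neg hj2, if_neg, zero_mul]
            intro hcon
            have := congrArg Fin.val hcon
            simp at this
            omega
      rw [Finset.sum_congr rfl fun j _ => hstep j, Finset.sum_add_distrib,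
        Finset.sum_ite_eq' Finset.univ i (fun j => (-1/ε) * y j),
        Finset.sum_ite_eq' Finset.univ (⟨(i:ℕ)-1, hlt⟩ : Fin (n+1)) (fun j => (1/ε) * y j)]
      simp only [Finset.mem_univ, if_true]
      ring
  -- key quadratic inequality
  have hkey : ∀ y : Fin (n+1) → ℝ, Wf n y ((M ε).mulVec y) ≤ -(A/2) * Wf n y y := by
    intro y
    set eN : ℕ → ℝ := fun k => if h : k < n+1 then y ⟨k, h⟩ - y 0 else 0 with heN_def
    set bN : ℕ → ℝ := fun k => if h : k < n+1 then b ⟨k, h⟩ else 0 with hbN_def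
    have heN0 : eN 0 = 0 := by simp [heN_def]
    have hbNnn : ∀ k, 0 ≤ bN k := by
      intro k
      by_cases h : k < n+1
      · simp only [hbN_def, dif_pos h]; exact hbnn _
      · simp only [hbN_def, dif_neg h, le_refl]
    have hbN1 : ∀ k, bN k ≤ 1 := by
      intro k
      by_cases h : k < n+1
      · simp only [hbN_def, dif_pos h]; exact hb1 _
      · simp only [hbN_def, dif_neg h]; norm_num
    have heNval : ∀ j : Fin (n+1), eN (j:ℕ) = y j - y 0 := by
      intro j
      simp only [heN_def, dif_pos j.2, Fin.eta]
    have hbNval : ∀ j : Fin (n+1), bN (j:ℕ) = b j := by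
      intro j
      simp only [hbN_def, dif_pos j.2, Fin.eta]
    have hbNsum : ∑ k ∈ range (n+1), bN k = A := by
      rw [← hbsum, ← Fin.sum_univ_eq_sum_range (fun k => bN k) (n+1)]
      exact Finset.sum_congr rfl fun j _ => hbNval j
    have hSe : ∑ k ∈ range (n+1), bN k * eN k = ∑ j : Fin (n+1), b j * (y j - y 0) := by
      rw [← Fin.sum_univ_eq_sum_range (fun k => bN k * eN k) (n+1)]
      exact Finset.sum_congr rfl fun j _ => by rw [hbNval j, heNval j]
    have hGe : ∑ k ∈ range (n+1), (2:ℝ)⁻¹ ^ k * eN k ^ 2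
        = ∑ j : Fin (n+1), (2:ℝ)⁻¹ ^ (j:ℕ) * ((y j - y 0) * (y j - y 0)) := by
      rw [← Fin.sum_univ_eq_sum_range (fun k => (2:ℝ)⁻¹ ^ k * eN k ^ 2) (n+1)]
      refine Finset.sum_congr rfl fun j _ => ?_
      rw [heNval j]
      ring
    have hcore := core_ineq n bN eN heN0 hbNnn hbN1 (y 0) ε hε0 (by rw [hbNsum]; exact hεs)
    rw [hbNsum, hSe, hGe] at hcore
    -- identify goal with hcore
    have hmv0 : (M ε).mulVec y 0 = -(A * y 0 + ∑ j : Fin (n+1), b j * (y j - y 0)) := by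
      rw [hMv y 0, dif_pos (by simp)]
      have hyb : ∑ j : Fin (n+1), b j * y j
          = A * y 0 + ∑ j : Fin (n+1), b j * (y j - y 0) := by
        rw [← hbsum, Finset.sum_mul, ← Finset.sum_add_distrib]
        exact Finset.sum_congr rfl fun j _ => by ring
      rw [hyb]
    have hconv : ∑ j : Fin (n+1), (2:ℝ)⁻¹ ^ (j:ℕ)
          * ((y j - y 0) * ((M ε).mulVec y j - (M ε).mulVec y 0))
        = ∑ k ∈ range (n+1), (2:ℝ)⁻¹ ^ k * eN k * ((eN (k-1) - eN k)/ε
            + (A * y 0 + ∑ j : Fin (n+1), b j * (y j - y 0))) := by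
      rw [← Fin.sum_univ_eq_sum_range (fun k => (2:ℝ)⁻¹ ^ k * eN k * ((eN (k-1) - eN k)/ε
            + (A * y 0 + ∑ j : Fin (n+1), b j * (y j - y 0)))) (n+1)]
      refine Finset.sum_congr rfl fun j _ => ?_
      by_cases hj : (j:ℕ) = 0
      · have hj0 : j = 0 := Fin.ext hj
        rw [hj0]
        simp only [heNval (0 : Fin (n+1))]
        simp [heN0]
      · have hjlt : (j:ℕ) - 1 < n + 1 := by have := j.2; omega
        have hmvj : (M ε).mulVec y j = (y ⟨(j:ℕ)-1, hjlt⟩ - y j)/ε := by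
          rw [hMv y j, dif_neg hj]
        have heprev : eN ((j:ℕ) - 1) = y ⟨(j:ℕ)-1, hjlt⟩ - y 0 := by
          simp only [heN_def, dif_pos hjlt]
        rw [hmvj, hmv0, heprev, heNval j]
        ring
    have hgl : Wf n y ((M ε).mulVec y)
        = y 0 * (-((∑ k ∈ range (n+1), bN k) * y 0) - ∑ j : Fin (n+1), b j * (y j - y 0))
          + ∑ k ∈ range (n+1), (2:ℝ)⁻¹ ^ k * eN k * ((eN (k-1) - eN k)/ε
            + (A * y 0 + ∑ j : Fin (n+1), b j * (y j - y 0))) := by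
      unfold Wf
      rw [hconv, hmv0, hbNsum]
      ring
    have hgr : -(A/2) * Wf n y y = -(A/2)
        * (y 0 ^ 2 + ∑ j : Fin (n+1), (2:ℝ)⁻¹ ^ (j:ℕ) * ((y j - y 0) * (y j - y 0))) := by
      unfold Wf
      ring
    rw [hgl, hgr, hbNsum]
    exact hcore
  constructor
  · -- Hurwitz
    intro lam hdet
    obtain ⟨v, hv0, hv⟩ := Matrix.exists_mulVec_eq_zero_iff.mpr hdet
    have hlam : ∀ i, ∑ j : Fin (n+1), (M ε i j : ℂ) * v j = lam * v i := by
      intro i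
      have h1 := congrFun hv i
      simp only [Matrix.sub_mulVec, Matrix.smul_mulVec, Matrix.one_mulVec,
        Pi.sub_apply, Pi.smul_apply, Pi.zero_apply, smul_eq_mul, sub_eq_zero] at h1
      rw [← h1]
      simp [Matrix.mulVec, dotProduct, Matrix.map_apply]
    set p : Fin (n+1) → ℝ := fun i => (v i).re with hp_def
    set q : Fin (n+1) → ℝ := fun i => (v i).im with hq_def
    have hmulr : ∀ (y : Fin (n+1) → ℝ) i, (M ε).mulVec y i = ∑ j, M ε i j * y j := by
      intro y i; simp [Matrix.mulVec, dotProduct]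
    have hp : (M ε).mulVec p = fun i => lam.re * p i + (-lam.im) * q i := by
      funext i
      have h1 := congrArg Complex.re (hlam i)
      simp only [Complex.re_sum, Complex.mul_re, Complex.ofReal_re, Complex.ofReal_im,
        zero_mul, sub_zero] at h1
      rw [hmulr p i]
      simp only [hp_def, hq_def]
      rw [h1]
      ring
    have hq : (M ε).mulVec q = fun i => lam.im * p i + lam.re * q i := by
      funext i
      have h1 := congrArg Complex.im (hlam i)
      simp only [Complex.im_sum, Complex.mul_im, Complex.ofReal_re, Complex.ofReal_im,
        zero_mul, add_zero] at h1
      rw [hmulr q i]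
      simp only [hp_def, hq_def]
      rw [h1]
      ring
    have k1 := hkey p
    have k2 := hkey q
    rw [hp, Wf_comb n lam.re (-lam.im) p p q] at k1
    rw [hq, Wf_comb n lam.im lam.re q p q] at k2
    have hsym := Wf_symm n q p
    have hXpos : 0 < Wf n p p + Wf n q q := by
      have hnz : p ≠ 0 ∨ q ≠ 0 := by
        by_contra hcon
        push_neg at hcon
        obtain ⟨hp0, hq0⟩ := hcon
        apply hv0
        funext i
        have h1 : p i = 0 := by rw [hp0]; rfl
        have h2 : q i = 0 := by rw [hq0]; rfl
        simp only [hp_def, hq_def] at h1 h2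
        exact Complex.ext h1 h2
      rcases hnz with h | h
      · have := Wf_pos n p h
        have := Wf_nonneg n q
        linarith
      · have := Wf_pos n q h
        have := Wf_nonneg n p
        linarith
    have hmul : lam.re * (Wf n p p + Wf n q q) ≤ -(A/2) * (Wf n p p + Wf n q q) := by
      rw [hsym] at k2
      nlinarith [k1, k2]
    have hre : lam.re ≤ -(A/2) := by
      have hX := hXpos
      by_contra hcon
      push_neg at hcon
      nlinarith [hmul, hXpos]
    linarith [hA_pos]
  · -- ODE
    intro x hx i
    set y : ℝ → Fin (n+1) → ℝ := fun t j => x t j - ξ0 with hy_def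
    have hyd : ∀ t (j : Fin (n+1)), HasDerivAt (fun s => y s j) ((M ε).mulVec (y t) j) t := by
      intro t j
      have h1 := (hx t j).sub_const ξ0
      have heq : (M ε).mulVec (y t) j
          = ∑ k : Fin (n+1), M ε j k * x t k + (if (j:ℕ) = 0 then Pd / abar else 0) := by
        have hyt : y t = x t - (fun _ => ξ0) := rfl
        rw [hyt, Matrix.mulVec_sub, Pi.sub_apply]
        have hconst : (M ε).mulVec (fun _ => ξ0) j
            = -(if (j:ℕ) = 0 then Pd / abar else 0) := by
          rw [hMv (fun _ => ξ0) j]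
          by_cases hj0 : (j:ℕ) = 0
          · rw [dif_pos hj0, if_pos hj0]
            rw [← Finset.sum_mul, hbsum, hA_def, hξ0]
            field_simp
          · rw [dif_neg hj0, if_neg hj0]
            simp
        rw [hconst]
        have hmx : (M ε).mulVec (x t) j = ∑ k : Fin (n+1), M ε j k * x t k := by
          simp [Matrix.mulVec, dotProduct]
        rw [hmx]
        ring
      rw [heq]
      exact h1
    set V : ℝ → ℝ := fun t => Wf n (y t) (y t) with hV_def
    have hVd : ∀ t, HasDerivAt V (2 * Wf n (y t) ((M ε).mulVec (y t))) t := by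
      intro t
      have hderiv : HasDerivAt
          (fun s => y s 0 * y s 0 + ∑ j : Fin (n+1),
            (2:ℝ)⁻¹ ^ (j:ℕ) * ((y s j - y s 0) * (y s j - y s 0)))
          ((M ε).mulVec (y t) 0 * y t 0 + y t 0 * (M ε).mulVec (y t) 0
            + ∑ j : Fin (n+1), (2:ℝ)⁻¹ ^ (j:ℕ)
              * ((((M ε).mulVec (y t) j - (M ε).mulVec (y t) 0) * (y t j - y t 0))
                + ((y t j - y t 0) * ((M ε).mulVec (y t) j - (M ε).mulVec (y t) 0)))) t := by
        refine ((hyd t 0).mul (hyd t 0)).add (HasDerivAt.fun_sum fun j _ => ?_)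
        exact (((hyd t j).sub (hyd t 0)).mul ((hyd t j).sub (hyd t 0))).const_mul _
      have hval : (M ε).mulVec (y t) 0 * y t 0 + y t 0 * (M ε).mulVec (y t) 0
            + ∑ j : Fin (n+1), (2:ℝ)⁻¹ ^ (j:ℕ)
              * ((((M ε).mulVec (y t) j - (M ε).mulVec (y t) 0) * (y t j - y t 0))
                + ((y t j - y t 0) * ((M ε).mulVec (y t) j - (M ε).mulVec (y t) 0)))
          = 2 * Wf n (y t) ((M ε).mulVec (y t)) := by
        unfold Wf
        rw [Finset.sum_congr rfl (fun (j : Fin (n+1)) (_ : j ∈ Finset.univ) => show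
            (2:ℝ)⁻¹ ^ (j:ℕ) * ((((M ε).mulVec (y t) j - (M ε).mulVec (y t) 0) * (y t j - y t 0))
                + ((y t j - y t 0) * ((M ε).mulVec (y t) j - (M ε).mulVec (y t) 0)))
            = 2 * ((2:ℝ)⁻¹ ^ (j:ℕ) * ((y t j - y t 0)
                * ((M ε).mulVec (y t) j - (M ε).mulVec (y t) 0))) from by ring),
          ← Finset.mul_sum]
        ring
      rw [← hval]
      exact hderiv
    have hVle : ∀ t, 2 * Wf n (y t) ((M ε).mulVec (y t)) ≤ -A * V t := by
      intro t
      have h := hkey (y t)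
      have hVt : V t = Wf n (y t) (y t) := rfl
      rw [hVt]
      linarith
    set g : ℝ → ℝ := fun t => V t * Real.exp (A * t) with hg_def
    have hgd : ∀ t, HasDerivAt g
        (2 * Wf n (y t) ((M ε).mulVec (y t)) * Real.exp (A * t)
          + V t * (Real.exp (A * t) * A)) t := by
      intro t
      have hexp : HasDerivAt (fun s : ℝ => Real.exp (A * s)) (Real.exp (A * t) * A) t := by
        simpa using (((hasDerivAt_id t).const_mul A).exp)
      exact (hVd t).mul hexp
    have hganti : Antitone g := by
      refine antitone_of_deriv_nonpos (fun t => (hgd t).differentiableAt) (fun t => ?_)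
      rw [(hgd t).deriv]
      have h1 := hVle t
      have h2 := (Real.exp_pos (A * t)).le
      nlinarith [mul_le_mul_of_nonneg_right h1 h2]
    have hVnn : ∀ t, 0 ≤ V t := fun t => Wf_nonneg n (y t)
    have hVbound : ∀ t, 0 ≤ t → V t ≤ V 0 * Real.exp (-(A * t)) := by
      intro t ht
      have h1 : g t ≤ g 0 := hganti ht
      simp only [hg_def, mul_zero, Real.exp_zero, mul_one] at h1
      calc V t = V t * Real.exp (A * t) * Real.exp (-(A * t)) := by
            rw [mul_assoc, ← Real.exp_add]; simp
        _ ≤ V 0 * Real.exp (-(A * t)) := mul_le_mul_of_nonneg_right h1 (Real.exp_pos _).le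
    have hVtend : Tendsto V atTop (nhds 0) := by
      have hup : Tendsto (fun t : ℝ => V 0 * Real.exp (-(A * t))) atTop (nhds 0) := by
        have h1 : Tendsto (fun t : ℝ => A * t) atTop atTop :=
          Tendsto.const_mul_atTop hA_pos tendsto_id
        have h2 : Tendsto (fun t : ℝ => -(A * t)) atTop atBot :=
          tendsto_neg_atTop_atBot.comp h1
        have h3 := Real.tendsto_exp_atBot.comp h2
        have h4 := h3.const_mul (V 0)
        simpa using h4
      refine tendsto_of_tendsto_of_tendsto_of_le_of_le' tendsto_const_nhds hup
        (Eventually.of_forall fun t => hVnn t) ?_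
      filter_upwards [eventually_ge_atTop (0:ℝ)] with t ht
      exact hVbound t ht
    have habs : ∀ f : ℝ → ℝ, (∀ t, f t * f t ≤ V t) → Tendsto f atTop (nhds 0) := by
      intro f hf
      have hsq : Tendsto (fun t => f t * f t) atTop (nhds 0) :=
        tendsto_of_tendsto_of_tendsto_of_le_of_le tendsto_const_nhds hVtend
          (fun t => mul_self_nonneg _) (fun t => hf t)
      rw [tendsto_zero_iff_abs_tendsto_zero]
      have h2 := (Real.continuous_sqrt.tendsto 0).comp hsq
      simp only [Function.comp_def, Real.sqrt_zero] at h2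
      simpa [Real.sqrt_mul_self_eq_abs, Function.comp_def] using h2
    have hy0 : Tendsto (fun t => y t 0) atTop (nhds 0) :=
      habs _ (fun t => Wf_head_le n (y t))
    have hyj : Tendsto (fun t => y t i - y t 0) atTop (nhds 0) := by
      have hw : (0:ℝ) < (2:ℝ)⁻¹ ^ (i:ℕ) := by positivity
      have hsw : 0 < Real.sqrt ((2:ℝ)⁻¹ ^ (i:ℕ)) := Real.sqrt_pos.mpr hw
      have h1 : Tendsto (fun t => Real.sqrt ((2:ℝ)⁻¹ ^ (i:ℕ)) * (y t i - y t 0))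
          atTop (nhds 0) := by
        apply habs
        intro t
        have hlhs : (Real.sqrt ((2:ℝ)⁻¹ ^ (i:ℕ)) * (y t i - y t 0))
              * (Real.sqrt ((2:ℝ)⁻¹ ^ (i:ℕ)) * (y t i - y t 0))
            = (2:ℝ)⁻¹ ^ (i:ℕ) * ((y t i - y t 0) * (y t i - y t 0)) := by
          rw [show ∀ a c : ℝ, (a*c)*(a*c) = (a*a)*(c*c) from fun a c => by ring,
            Real.mul_self_sqrt hw.le]
        rw [hlhs]
        exact Wf_term_le n (y t) i
      have h2 := h1.const_mul (Real.sqrt ((2:ℝ)⁻¹ ^ (i:ℕ)))⁻¹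
      have hfun : (fun t => (Real.sqrt ((2:ℝ)⁻¹ ^ (i:ℕ)))⁻¹
            * (Real.sqrt ((2:ℝ)⁻¹ ^ (i:ℕ)) * (y t i - y t 0)))
          = fun t => y t i - y t 0 := funext fun t => by
        rw [inv_mul_cancel_left₀ hsw.ne']
      rw [hfun] at h2
      simpa using h2
    have hyi : Tendsto (fun t => y t i) atTop (nhds 0) := by
      have h3 := hyj.add hy0
      simpa using h3
    have hxi : Tendsto (fun t => y t i + ξ0) atTop (nhds (0 + ξ0)) :=
      hyi.add tendsto_const_nhds
    simpa [hy_def] using hxi
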